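/- Let D > 0, L > 0, κ > 0 and M^L ∈ ℝ. Define ρ̄^L(x) = −(D·κ/2)·(1 + 1/L²)·cos(x) + M^L/(2π), and let f be the repulsive interaction kernel f(x) = sgn(x)/(exp(2π/L) − 1) · [exp((2π − |x|)/L) − exp(|x|/L)] on [−π, π], extended 2π-periodically. Then the circular convolution satisfies (f*ρ̄^L)(x) = ∫_{−π}^{π} f(x − y) ρ̄^L(y) dy = −D·κ·sin(x) for all x; in particular, with ρ̂(x) = exp(κ·cos x)/∫_{−π}^{π} exp(κ·cos y) dy, one has (f*ρ̄^L)(x) = D·ρ̂'(x)/ρ̂(x). -/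

import Mathlib

/-- The repulsive interaction kernel on `[-π, π]` with characteristic length `L`. -/
noncomputable def repKernel (L x : ℝ) : ℝ :=
  Real.sign x / (Real.exp (2 * Real.pi / L) - 1) *
    (Real.exp ((2 * Real.pi - |x|) / L) - Real.exp (|x| / L))

/-- Wrap a real number to the fundamental domain `[-π, π)`. -/
noncomputable def wrap (x : ℝ) : ℝ :=
  2 * Real.pi * Int.fract ((x + Real.pi) / (2 * Real.pi)) - Real.pi

/-- The 2π-periodic extension of the repulsive kernel. -/
noncomputable def perKernel (L x : ℝ) : ℝ := repKernel L (wrap x)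

open Real MeasureTheory intervalIntegral Set

lemma wrap_eq_of_Ico {x : ℝ} (hx : x ∈ Set.Ico (-π) π) : wrap x = x := by
  have h2π : (0:ℝ) < 2 * π := by positivity
  have h1 : (x + π) / (2 * π) ∈ Set.Ico (0:ℝ) 1 := by
    constructor
    · apply div_nonneg _ h2π.le; linarith [hx.1]
    · rw [div_lt_one h2π]; linarith [hx.2]
  unfold wrap
  rw [Int.fract_eq_self.mpr ⟨h1.1, h1.2⟩]
  field_simp
  ring

lemma wrap_pi : wrap π = -π := by
  have h2π : (0:ℝ) < 2 * π := by positivity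
  have h : (π + π) / (2 * π) = 1 := by
    rw [div_eq_one_iff_eq (ne_of_gt h2π)]; ring
  unfold wrap
  rw [h, Int.fract_one]
  ring

lemma repKernel_neg (L x : ℝ) : repKernel L (-x) = - repKernel L x := by
  unfold repKernel
  rw [Real.sign_neg, abs_neg]
  ring

lemma repKernel_pi (L : ℝ) : repKernel L π = 0 := by
  unfold repKernel
  rw [abs_of_pos Real.pi_pos, show 2 * π - π = π from by ring, sub_self, mul_zero]

lemma perKernel_eq_repKernel (L : ℝ) {x : ℝ} (hx : x ∈ Set.Icc (-π) π) :
    perKernel L x = repKernel L x := by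
  rcases eq_or_lt_of_le hx.2 with h | h
  · subst h
    unfold perKernel
    simp [wrap_pi, repKernel_neg, repKernel_pi]
  · unfold perKernel
    rw [wrap_eq_of_Ico ⟨hx.1, h⟩]

lemma wrap_add_two_pi (x : ℝ) : wrap (x + 2 * π) = wrap x := by
  have h2π : (2 * π : ℝ) ≠ 0 := by positivity
  unfold wrap
  rw [show (x + 2 * π + π) / (2 * π) = (x + π) / (2 * π) + 1 from by field_simp; ring,
    Int.fract_add_one]

lemma perKernel_periodic (L : ℝ) : Function.Periodic (perKernel L) (2 * π) := fun x => by
  unfold perKernel; rw [wrap_add_two_pi]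

lemma repKernel_intInt_left (L : ℝ) {g : ℝ → ℝ} (hg : Continuous g) :
    IntervalIntegrable (fun u => repKernel L u * g u) volume (-π) 0 := by
  have hle : (-π : ℝ) ≤ 0 := by linarith [Real.pi_pos]
  rw [intervalIntegrable_iff, uIoc_of_le hle, integrableOn_Ioc_iff_integrableOn_Ioo]
  have hc : Continuous fun u : ℝ =>
      (-1) / (Real.exp (2 * π / L) - 1) *
        (Real.exp ((2 * π - -u) / L) - Real.exp (-u / L)) * g u := by
    fun_prop
  refine (hc.integrableOn_Icc.mono_set Set.Ioo_subset_Icc_self).congr_fun ?_ measurableSet_Ioo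
  intro u hu
  simp only [repKernel, Real.sign_of_neg hu.2, abs_of_neg hu.2]

lemma repKernel_intInt_right (L : ℝ) {g : ℝ → ℝ} (hg : Continuous g) :
    IntervalIntegrable (fun u => repKernel L u * g u) volume 0 π := by
  have hle : (0 : ℝ) ≤ π := Real.pi_pos.le
  rw [intervalIntegrable_iff, uIoc_of_le hle, integrableOn_Ioc_iff_integrableOn_Ioo]
  have hc : Continuous fun u : ℝ =>
      1 / (Real.exp (2 * π / L) - 1) *
        (Real.exp ((2 * π - u) / L) - Real.exp (u / L)) * g u := by
    fun_prop
  refine (hc.integrableOn_Icc.mono_set Set.Ioo_subset_Icc_self).congr_fun ?_ measurableSet_Ioo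
  intro u hu
  simp only [repKernel, Real.sign_of_pos hu.1, abs_of_pos hu.1]

lemma repKernel_intInt (L : ℝ) {g : ℝ → ℝ} (hg : Continuous g) :
    IntervalIntegrable (fun u => repKernel L u * g u) volume (-π) π :=
  (repKernel_intInt_left L hg).trans (repKernel_intInt_right L hg)

lemma integral_odd_pi {h : ℝ → ℝ} (hodd : ∀ u, h (-u) = - h u) :
    (∫ u in (-π)..π, h u) = 0 := by
  have h1 : (∫ x in (-π)..π, h (-x)) = ∫ x in (-π)..π, h x := by
    simpa using intervalIntegral.integral_comp_neg (a := -π) (b := π) (f := h)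
  have h2 : (∫ x in (-π)..π, h (-x)) = - ∫ x in (-π)..π, h x := by
    simp_rw [hodd]
    exact intervalIntegral.integral_neg
  linarith [h1, h2, h1.symm.trans h2]

lemma exp_sin_integral (L : ℝ) (hL : 0 < L) :
    (∫ u in (0:ℝ)..π, (Real.exp ((2 * π - u) / L) - Real.exp (u / L)) * Real.sin u)
      = (Real.exp (2 * π / L) - 1) * (L ^ 2 / (L ^ 2 + 1)) := by
  have hL' : L ≠ 0 := ne_of_gt hL
  have hL2 : L ^ 2 + 1 ≠ 0 := by positivity
  set H : ℝ → ℝ := fun u =>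
    (Real.exp ((2 * π - u) / L) * (-(1 / L) * Real.sin u - Real.cos u)
      - Real.exp (u / L) * ((1 / L) * Real.sin u - Real.cos u)) * (L ^ 2 / (L ^ 2 + 1)) with hH
  have hderiv : ∀ u ∈ Set.uIcc (0:ℝ) π,
      HasDerivAt H ((Real.exp ((2 * π - u) / L) - Real.exp (u / L)) * Real.sin u) u := by
    intro u _
    have h1 : HasDerivAt (fun u : ℝ => (2 * π - u) / L) (-1 / L) u :=
      (((hasDerivAt_id u).const_sub (2 * π)).div_const L)
    have e1 : HasDerivAt (fun u : ℝ => Real.exp ((2 * π - u) / L))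
        (Real.exp ((2 * π - u) / L) * (-1 / L)) u := by
      simpa [mul_comm] using h1.exp
    have h2 : HasDerivAt (fun u : ℝ => u / L) (1 / L) u := by
      simpa using (hasDerivAt_id u).div_const L
    have e2 : HasDerivAt (fun u : ℝ => Real.exp (u / L))
        (Real.exp (u / L) * (1 / L)) u := by
      simpa [mul_comm] using h2.exp
    have t1 : HasDerivAt (fun u : ℝ => -(1 / L) * Real.sin u - Real.cos u)
        (-(1 / L) * Real.cos u - (-Real.sin u)) u :=
      ((Real.hasDerivAt_sin u).const_mul (-(1 / L))).sub (Real.hasDerivAt_cos u)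
    have t2 : HasDerivAt (fun u : ℝ => (1 / L) * Real.sin u - Real.cos u)
        ((1 / L) * Real.cos u - (-Real.sin u)) u :=
      ((Real.hasDerivAt_sin u).const_mul (1 / L)).sub (Real.hasDerivAt_cos u)
    have hmain := ((e1.mul t1).sub (e2.mul t2)).mul_const (L ^ 2 / (L ^ 2 + 1))
    refine hmain.congr_deriv ?_
    field_simp
    ring
  have hcont : IntervalIntegrable
      (fun u => (Real.exp ((2 * π - u) / L) - Real.exp (u / L)) * Real.sin u) volume 0 π := by
    apply Continuous.intervalIntegrable
    fun_prop
  rw [intervalIntegral.integral_eq_sub_of_hasDerivAt hderiv hcont]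
  simp only [hH, Real.sin_pi, Real.cos_pi, Real.sin_zero, Real.cos_zero,
    show 2 * π - π = π from by ring]
  simp only [sub_zero, zero_div, Real.exp_zero]
  ring

lemma repKernel_sin_integral (L : ℝ) (hL : 0 < L) :
    (∫ u in (-π)..π, repKernel L u * Real.sin u) = 2 * (L ^ 2 / (L ^ 2 + 1)) := by
  have hE : (1:ℝ) < Real.exp (2 * π / L) := by
    rw [Real.one_lt_exp_iff]
    positivity
  have hE' : Real.exp (2 * π / L) - 1 ≠ 0 := by linarith
  have hsplit := intervalIntegral.integral_add_adjacent_intervals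
    (repKernel_intInt_left L Real.continuous_sin) (repKernel_intInt_right L Real.continuous_sin)
  have hflip : (∫ u in (-π)..(0:ℝ), repKernel L u * Real.sin u)
      = ∫ u in (0:ℝ)..π, repKernel L u * Real.sin u := by
    have h := intervalIntegral.integral_comp_neg (a := (0:ℝ)) (b := π)
      (f := fun u => repKernel L u * Real.sin u)
    simp only [neg_zero] at h
    rw [← h]
    simp_rw [repKernel_neg, Real.sin_neg, neg_mul_neg]
  have hright : (∫ u in (0:ℝ)..π, repKernel L u * Real.sin u)
      = 1 / (Real.exp (2 * π / L) - 1)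
        * ((Real.exp (2 * π / L) - 1) * (L ^ 2 / (L ^ 2 + 1))) := by
    rw [← exp_sin_integral L hL, ← intervalIntegral.integral_const_mul]
    apply intervalIntegral.integral_congr
    intro u hu
    rw [Set.uIcc_of_le Real.pi_pos.le] at hu
    rcases eq_or_lt_of_le hu.1 with h0 | h0
    · simp [← h0, repKernel]
    · simp only [repKernel, Real.sign_of_pos h0, abs_of_pos h0]
      ring
  have : (∫ u in (-π)..π, repKernel L u * Real.sin u)
      = 2 * (1 / (Real.exp (2 * π / L) - 1)
        * ((Real.exp (2 * π / L) - 1) * (L ^ 2 / (L ^ 2 + 1)))) := by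
    rw [← hsplit, hflip, hright]; ring
  rw [this]
  field_simp

lemma conv_eq (D L κ ML : ℝ) (hL : 0 < L) (x : ℝ) :
    (∫ y in (-π)..π, perKernel L (x - y) *
      (-(D * κ / 2) * (1 + 1 / L ^ 2) * Real.cos y + ML / (2 * π)))
      = -D * κ * Real.sin x := by
  have hL' : L ≠ 0 := ne_of_gt hL
  have hL2 : L ^ 2 + 1 ≠ 0 := by positivity
  have hpi : (-π : ℝ) ≤ π := by linarith [Real.pi_pos]
  set A : ℝ := -(D * κ / 2) * (1 + 1 / L ^ 2) with hA
  set C : ℝ := ML / (2 * π) with hC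
  set F : ℝ → ℝ := fun u => perKernel L u * (A * Real.cos (x - u) + C) with hF
  have step1 : (∫ y in (-π)..π, perKernel L (x - y) * (A * Real.cos y + C))
      = ∫ y in (-π)..π, F (x - y) := by
    apply intervalIntegral.integral_congr
    intro y _
    simp only [hF]
    rw [show x - (x - y) = y from by ring]
  have step2 : (∫ y in (-π)..π, F (x - y)) = ∫ u in (x - π)..(x + π), F u := by
    simpa [sub_neg_eq_add] using intervalIntegral.integral_comp_sub_left F x
  have hper : Function.Periodic F (2 * π) := by
    intro u
    simp only [hF]
    rw [perKernel_periodic L u,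
      show x - (u + 2 * π) = (x - u) - 2 * π from by ring, Real.cos_sub_two_pi]
  have step3 : (∫ u in (x - π)..(x + π), F u) = ∫ u in (-π)..π, F u := by
    have h := hper.intervalIntegral_add_eq (x - π) (-π)
    rw [show x - π + 2 * π = x + π from by ring, show -π + 2 * π = π from by ring] at h
    exact h
  have step4 : (∫ u in (-π)..π, F u)
      = ∫ u in (-π)..π, repKernel L u * (A * Real.cos (x - u) + C) := by
    apply intervalIntegral.integral_congr
    intro u hu
    rw [Set.uIcc_of_le hpi] at hu
    simp only [hF]
    rw [perKernel_eq_repKernel L hu]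
  have hI1 := repKernel_intInt L Real.continuous_cos
  have hI2 := repKernel_intInt L Real.continuous_sin
  have hI3 := repKernel_intInt L (continuous_const : Continuous fun _ : ℝ => (1:ℝ))
  have step5 : (∫ u in (-π)..π, repKernel L u * (A * Real.cos (x - u) + C))
      = (A * Real.cos x) * (∫ u in (-π)..π, repKernel L u * Real.cos u)
        + ((A * Real.sin x) * (∫ u in (-π)..π, repKernel L u * Real.sin u)
          + C * (∫ u in (-π)..π, repKernel L u * 1)) := by
    rw [← intervalIntegral.integral_const_mul, ← intervalIntegral.integral_const_mul,
      ← intervalIntegral.integral_const_mul,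
      ← intervalIntegral.integral_add (hI2.const_mul _) (hI3.const_mul _),
      ← intervalIntegral.integral_add (hI1.const_mul _)
        ((hI2.const_mul _).add (hI3.const_mul _))]
    apply intervalIntegral.integral_congr
    intro u _
    simp only
    rw [Real.cos_sub]
    ring
  have z1 : (∫ u in (-π)..π, repKernel L u * Real.cos u) = 0 :=
    integral_odd_pi (fun u => by rw [repKernel_neg, Real.cos_neg]; ring)
  have z3 : (∫ u in (-π)..π, repKernel L u * 1) = 0 :=
    integral_odd_pi (fun u => by rw [repKernel_neg]; ring)
  rw [step1, step2, step3, step4, step5, z1, z3, repKernel_sin_integral L hL]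
  rw [hA]
  field_simp
  ring

/-- Equation (36) of the paper: in the von Mises example, the reference leaders'
density `ρ̄^L(x) = -(Dκ/2)(1 + 1/L²)cos x + M^L/(2π)` generates through the
repulsive kernel exactly the desired followers' velocity field
`v̄^{FL}(x) = -Dκ sin x = D ρ̂'(x)/ρ̂(x)`. -/
theorem vonMises_reference_density_generates_velocity
    (D L κ ML : ℝ) (hD : 0 < D) (hL : 0 < L) (hκ : 0 < κ) :
    let ρL : ℝ → ℝ := fun x =>
      -(D * κ / 2) * (1 + 1 / L ^ 2) * Real.cos x + ML / (2 * Real.pi)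
    let ρhat : ℝ → ℝ := fun x =>
      Real.exp (κ * Real.cos x) / ∫ y in (-Real.pi)..Real.pi, Real.exp (κ * Real.cos y)
    (∀ x, (∫ y in (-Real.pi)..Real.pi, perKernel L (x - y) * ρL y)
        = -D * κ * Real.sin x) ∧
    (∀ x, (∫ y in (-Real.pi)..Real.pi, perKernel L (x - y) * ρL y)
        = D * deriv ρhat x / ρhat x) := by
  intro ρL ρhat
  have hconv : ∀ x, (∫ y in (-Real.pi)..Real.pi, perKernel L (x - y) * ρL y)
      = -D * κ * Real.sin x := fun x => conv_eq D L κ ML hL x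
  refine ⟨hconv, fun x => ?_⟩
  rw [hconv x]
  set Z : ℝ := ∫ y in (-Real.pi)..Real.pi, Real.exp (κ * Real.cos y) with hZdef
  have hZ : 0 < Z := by
    apply intervalIntegral.intervalIntegral_pos_of_pos_on
    · apply Continuous.intervalIntegrable; fun_prop
    · intro y _; exact Real.exp_pos _
    · linarith [Real.pi_pos]
  have hd : HasDerivAt ρhat (Real.exp (κ * Real.cos x) * (κ * -Real.sin x) / Z) x := by
    have h1 : HasDerivAt (fun x : ℝ => κ * Real.cos x) (κ * -Real.sin x) x :=
      (Real.hasDerivAt_cos x).const_mul κ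
    exact (h1.exp).div_const Z
  rw [hd.deriv]
  have hne : Real.exp (κ * Real.cos x) ≠ 0 := Real.exp_ne_zero _
  have hρ : ρhat x = Real.exp (κ * Real.cos x) / Z := rfl
  rw [hρ]
  field_simp
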